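/- arXiv:2206.08858 — 4 statements merged into one kernel-verified Lean document; each statement's English description precedes it below -/
import Mathlib

section
/- The Steinhaus transform of a metric is a metric: for any metric d on S and fixed c ∈ S, the function d̄(x,y) = 2d(x,y)/(d(x,c)+d(y,c)+d(x,y)) (taken to be 0 when x = y) satisfies the identity of indiscernibles, symmetry, and the triangle inequality. -/
/-- The Steinhaus (biotope) transform of the metric `dist` with respect to a
reference point `c`.  (In Lean, division by zero yields `0`, so `steinhaus c x x = 0`
automatically, matching the convention `d̄(x,x) = 0`.) -/
noncomputable def steinhaus {S : Type*} [MetricSpace S] (c x y : S) : ℝ :=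
  2 * dist x y / (dist x c + dist y c + dist x y)

lemma steinhaus_nonneg {S : Type*} [MetricSpace S] (c x y : S) : 0 ≤ steinhaus c x y := by
  unfold steinhaus
  apply div_nonneg
  · positivity
  · positivity

lemma steinhaus_aux (a b e p q r : ℝ) (ha : 0 ≤ a) (hb : 0 ≤ b) (hp : 0 ≤ p) (hr : 0 ≤ r)
    (h1 : e ≤ a + b) (h2 : q ≤ b + r) (h3 : q ≤ a + p)
    (dpq : 0 < p + q + a) (dqr : 0 < q + r + b) (dpr : 0 < p + r + e) :
    2 * e / (p + r + e) ≤ 2 * a / (p + q + a) + 2 * b / (q + r + b) := by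
  have hK : 0 < p + r + (a + b) := by linarith
  have s1 : 2 * e / (p + r + e) ≤ 2 * (a + b) / (p + r + (a + b)) := by
    rw [div_le_div_iff₀ dpr hK]
    nlinarith [mul_le_mul_of_nonneg_right h1 (add_nonneg hp hr)]
  have s2 : 2 * (a + b) / (p + r + (a + b)) =
      2 * a / (p + r + (a + b)) + 2 * b / (p + r + (a + b)) := by ring
  have s3 : 2 * a / (p + r + (a + b)) ≤ 2 * a / (p + q + a) := by
    apply div_le_div_of_nonneg_left (by linarith) dpq (by linarith)
  have s4 : 2 * b / (p + r + (a + b)) ≤ 2 * b / (q + r + b) := by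
    apply div_le_div_of_nonneg_left (by linarith) dqr (by linarith)
  linarith

/-- The Steinhaus transform of a metric is a metric: it satisfies the identity of
indiscernibles, symmetry, and the triangle inequality. -/
theorem steinhaus_is_metric {S : Type*} [MetricSpace S] (c : S) :
    (∀ x y : S, steinhaus c x y = 0 ↔ x = y) ∧
    (∀ x y : S, steinhaus c x y = steinhaus c y x) ∧
    (∀ x y z : S, steinhaus c x z ≤ steinhaus c x y + steinhaus c y z) := by
  refine ⟨?_, ?_, ?_⟩
  · intro x y
    constructor
    · intro h
      by_contra hxy
      have hd : 0 < dist x y := dist_pos.mpr hxy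
      have hden : 0 < dist x c + dist y c + dist x y := by positivity
      have : 0 < steinhaus c x y := by
        unfold steinhaus; positivity
      linarith [this, h.ge, h.le]
    · rintro rfl
      simp [steinhaus]
  · intro x y
    unfold steinhaus
    rw [dist_comm x y]
    ring_nf
  · intro x y z
    by_cases hxy : x = y
    · subst hxy
      simp [steinhaus, steinhaus_nonneg]
    by_cases hyz : y = z
    · subst hyz
      simp [steinhaus, steinhaus_nonneg]
    by_cases hxz : x = z
    · subst hxz
      have := steinhaus_nonneg c x y
      have := steinhaus_nonneg c y x
      simp [steinhaus]
      positivity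
    unfold steinhaus
    apply steinhaus_aux
    · exact dist_nonneg
    · exact dist_nonneg
    · exact dist_nonneg
    · exact dist_nonneg
    · exact dist_triangle x y z
    · exact dist_triangle y z c
    · rw [dist_comm x y]; exact dist_triangle y x c
    · have := dist_pos.mpr hxy; positivity
    · have := dist_pos.mpr hyz; positivity
    · have := dist_pos.mpr hxz; positivity
end

section
/- The matching distance satisfies the triangle inequality: d_M(X,Y) ≤ d_M(X,Z) + d_M(Z,Y) for all finite multisets X, Y, Z over a metric space. -/
/-- `M` is a matching of the multisets `A` and `B`: a multiset of pairs `(x, y)` with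
`x ∈ A`, `y ∈ B`, using each element of `A` and of `B` at most once, counting
multiplicity. -/
def IsMatching {α : Type*} (A B : Multiset α) (M : Multiset (α × α)) : Prop :=
  M.map Prod.fst ≤ A ∧ M.map Prod.snd ≤ B

/-- Cost of a matching `M` of `A` and `B`: sum of pairwise distances of matched
elements plus penalties `d(·, Λ)` for unmatched elements. -/
noncomputable def matchingCost {α : Type*} [MetricSpace α] [DecidableEq α] (Λ : α)
    (A B : Multiset α) (M : Multiset (α × α)) : ℝ :=
  (M.map fun p => dist p.1 p.2).sum
    + ((A - M.map Prod.fst).map fun x => dist x Λ).sum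
    + ((B - M.map Prod.snd).map fun y => dist y Λ).sum

/-- The matching distance `d_M`: the minimal cost over all matchings. -/
noncomputable def dMatch {α : Type*} [MetricSpace α] [DecidableEq α] (Λ : α) (A B : Multiset α) : ℝ :=
  sInf {c | ∃ M, IsMatching A B M ∧ c = matchingCost Λ A B M}

private lemma mcons_le_iff {α : Type*} [DecidableEq α] {s t : Multiset α} {a : α} :
    a ::ₘ s ≤ t ↔ a ∈ t ∧ s ≤ t.erase a := by
  constructor
  · intro h
    refine ⟨Multiset.mem_of_le h (Multiset.mem_cons_self a s), ?_⟩
    have := Multiset.erase_le_erase a h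
    simpa using this
  · rintro ⟨ha, hs⟩
    calc a ::ₘ s ≤ a ::ₘ t.erase a := Multiset.cons_le_cons a hs
    _ = t := Multiset.cons_erase ha

private lemma le_erase_of_notMem {α : Type*} [DecidableEq α] {s t : Multiset α} {a : α}
    (h : t ≤ s) (ha : a ∉ t) : t ≤ s.erase a := by
  rw [Multiset.le_iff_count] at h ⊢
  intro x
  rcases eq_or_ne x a with rfl | hx
  · simp [Multiset.count_eq_zero_of_notMem ha]
  · rw [Multiset.count_erase_of_ne hx]; exact h x

private lemma sub_eq_cons {α : Type*} [DecidableEq α] {s t : Multiset α} {a : α}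
    (ha : a ∈ s) (ht : t ≤ s.erase a) : s - t = a ::ₘ (s.erase a - t) := by
  conv_lhs => rw [← Multiset.cons_erase ha]
  rw [Multiset.cons_sub_of_le _ ht]

private lemma sum_map_erase {α : Type*} [DecidableEq α] (f : α → ℝ) {s : Multiset α} {a : α}
    (h : a ∈ s) : (s.map f).sum = f a + ((s.erase a).map f).sum := by
  conv_lhs => rw [← Multiset.cons_erase h]
  simp

private lemma sum_dist_nonneg {α : Type*} [MetricSpace α] (Λ : α) (s : Multiset α) :
    0 ≤ (s.map fun x => dist x Λ).sum := by
  apply Multiset.sum_nonneg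
  intro x hx
  obtain ⟨y, -, rfl⟩ := Multiset.mem_map.mp hx
  exact dist_nonneg

private lemma matchingCost_nonneg {α : Type*} [MetricSpace α] [DecidableEq α] (Λ : α)
    (A B : Multiset α) (M : Multiset (α × α)) : 0 ≤ matchingCost Λ A B M := by
  have h1 : 0 ≤ (M.map fun p => dist p.1 p.2).sum := by
    apply Multiset.sum_nonneg
    intro x hx
    obtain ⟨y, -, rfl⟩ := Multiset.mem_map.mp hx
    exact dist_nonneg
  have h2 := sum_dist_nonneg Λ (A - M.map Prod.fst)
  have h3 := sum_dist_nonneg Λ (B - M.map Prod.snd)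
  unfold matchingCost
  linarith

private lemma base_bound {α : Type*} [MetricSpace α] [DecidableEq α] (Λ : α) :
    ∀ (M : Multiset (α × α)) (C B : Multiset α), M.map Prod.fst ≤ C → M.map Prod.snd ≤ B →
    (B.map fun y => dist y Λ).sum ≤
      (M.map fun p => dist p.1 p.2).sum + (C.map fun x => dist x Λ).sum
        + ((B - M.map Prod.snd).map fun y => dist y Λ).sum := by
  intro M
  induction M using Multiset.induction with
  | empty =>
    intro C B _ _
    have := sum_dist_nonneg Λ C
    simp only [Multiset.map_zero, Multiset.sum_zero, Multiset.sub_zero]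
    linarith
  | cons p M ih =>
    intro C B h1 h2
    obtain ⟨c, b⟩ := p
    simp only [Multiset.map_cons] at h1 h2
    rw [mcons_le_iff] at h1 h2
    obtain ⟨hc, h1⟩ := h1
    obtain ⟨hb, h2⟩ := h2
    have key := ih (C.erase c) (B.erase b) h1 h2
    have hB : (B.map fun y => dist y Λ).sum
        = dist b Λ + ((B.erase b).map fun y => dist y Λ).sum := sum_map_erase _ hb
    have hC : (C.map fun x => dist x Λ).sum
        = dist c Λ + ((C.erase c).map fun x => dist x Λ).sum := sum_map_erase _ hc
    have hsub : B - (b ::ₘ M.map Prod.snd) = B.erase b - M.map Prod.snd :=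
      Multiset.sub_cons b _ _
    have htri : dist b Λ ≤ dist c b + dist c Λ := by
      rw [dist_comm c b]; exact dist_triangle b c Λ
    simp only [Multiset.map_cons, Multiset.sum_cons, hsub]
    rw [hB, hC]
    linarith

private lemma compose_bound {α : Type*} [MetricSpace α] [DecidableEq α] (Λ : α) :
    ∀ (M₁ : Multiset (α × α)) (A C B : Multiset α) (M₂ : Multiset (α × α)),
      IsMatching A C M₁ → IsMatching C B M₂ →
      ∃ N, IsMatching A B N ∧
        matchingCost Λ A B N ≤ matchingCost Λ A C M₁ + matchingCost Λ C B M₂ := by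
  intro M₁
  induction M₁ using Multiset.induction with
  | empty =>
    intro A C B M₂ _ hm2
    refine ⟨0, ⟨by simp, by simp⟩, ?_⟩
    obtain ⟨h1, h2⟩ := hm2
    have key := base_bound Λ M₂ C B h1 h2
    have h3 := sum_dist_nonneg Λ (C - M₂.map Prod.fst)
    simp only [matchingCost, Multiset.map_zero, Multiset.sum_zero, Multiset.sub_zero]
    linarith
  | cons p M₁ ih =>
    intro A C B M₂ hm1 hm2
    obtain ⟨a, c⟩ := p
    obtain ⟨h1, h2⟩ := hm1
    simp only [Multiset.map_cons] at h1 h2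
    rw [mcons_le_iff] at h1 h2
    obtain ⟨ha, h1⟩ := h1
    obtain ⟨hc, h2⟩ := h2
    obtain ⟨g1, g2⟩ := hm2
    by_cases hcase : c ∈ M₂.map Prod.fst
    · -- c is matched in M₂
      obtain ⟨q, hq, hqc⟩ := Multiset.mem_map.mp hcase
      obtain ⟨c', b⟩ := q
      simp only at hqc
      subst hqc
      have hM₂ : M₂ = (c', b) ::ₘ M₂.erase (c', b) := (Multiset.cons_erase hq).symm
      rw [hM₂] at g1 g2
      simp only [Multiset.map_cons] at g1 g2
      rw [mcons_le_iff] at g1 g2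
      obtain ⟨hcC, g1⟩ := g1
      obtain ⟨hbB, g2⟩ := g2
      obtain ⟨N, ⟨n1, n2⟩, hN⟩ := ih (A.erase a) (C.erase c') (B.erase b) (M₂.erase (c', b))
        ⟨h1, h2⟩ ⟨g1, g2⟩
      refine ⟨(a, b) ::ₘ N, ⟨?_, ?_⟩, ?_⟩
      · simp only [Multiset.map_cons]; exact mcons_le_iff.mpr ⟨ha, n1⟩
      · simp only [Multiset.map_cons]; exact mcons_le_iff.mpr ⟨hbB, n2⟩
      · have htri : dist a b ≤ dist a c' + dist c' b := dist_triangle a c' b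
        rw [hM₂]
        simp only [matchingCost, Multiset.map_cons, Multiset.sum_cons,
          Multiset.sub_cons] at hN ⊢
        linarith
    · -- c is unmatched in M₂
      have g1' : M₂.map Prod.fst ≤ C.erase c := le_erase_of_notMem g1 hcase
      obtain ⟨N, ⟨n1, n2⟩, hN⟩ := ih (A.erase a) (C.erase c) B M₂ ⟨h1, h2⟩ ⟨g1', g2⟩
      refine ⟨N, ⟨le_trans n1 (Multiset.erase_le a A), n2⟩, ?_⟩
      have hA : A - N.map Prod.fst = a ::ₘ (A.erase a - N.map Prod.fst) := sub_eq_cons ha n1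
      have hC : C - M₂.map Prod.fst = c ::ₘ (C.erase c - M₂.map Prod.fst) :=
        sub_eq_cons hc g1'
      have htri : dist a Λ ≤ dist a c + dist c Λ := dist_triangle a c Λ
      simp only [matchingCost, Multiset.map_cons, Multiset.sum_cons, Multiset.sub_cons,
        hA, hC] at hN ⊢
      linarith

/-- The matching distance satisfies the triangle inequality. -/
theorem dMatch_triangle {α : Type*} [MetricSpace α] [DecidableEq α] (Λ : α) (A B C : Multiset α) :
    dMatch Λ A B ≤ dMatch Λ A C + dMatch Λ C B := by
  set S₁ := {c | ∃ M, IsMatching A C M ∧ c = matchingCost Λ A C M} with hS₁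
  set S₂ := {c | ∃ M, IsMatching C B M ∧ c = matchingCost Λ C B M} with hS₂
  have hne₁ : S₁.Nonempty := ⟨matchingCost Λ A C 0, 0, ⟨by simp [IsMatching], by simp [IsMatching]⟩, rfl⟩
  have hne₂ : S₂.Nonempty := ⟨matchingCost Λ C B 0, 0, ⟨by simp [IsMatching], by simp [IsMatching]⟩, rfl⟩
  have hbdd : BddBelow {c | ∃ M, IsMatching A B M ∧ c = matchingCost Λ A B M} := by
    refine ⟨0, ?_⟩
    rintro x ⟨M, -, rfl⟩
    exact matchingCost_nonneg Λ A B M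
  have key : ∀ c₁ ∈ S₁, ∀ c₂ ∈ S₂, dMatch Λ A B ≤ c₁ + c₂ := by
    rintro c₁ ⟨M₁, hM₁, rfl⟩ c₂ ⟨M₂, hM₂, rfl⟩
    obtain ⟨N, hN, hcost⟩ := compose_bound Λ M₁ A C B M₂ hM₁ hM₂
    calc dMatch Λ A B ≤ matchingCost Λ A B N := csInf_le hbdd ⟨N, hN, rfl⟩
    _ ≤ _ := hcost
  have h1 : dMatch Λ A B - sInf S₂ ≤ sInf S₁ := by
    apply le_csInf hne₁
    intro c₁ hc₁
    rw [sub_le_iff_le_add, add_comm, ← sub_le_iff_le_add]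
    apply le_csInf hne₂
    intro c₂ hc₂
    rw [sub_le_iff_le_add, add_comm]
    exact key c₁ hc₁ c₂ hc₂
  have e1 : dMatch Λ A C = sInf S₁ := rfl
  have e2 : dMatch Λ C B = sInf S₂ := rfl
  rw [e1, e2]
  linarith
end

section
/- The edit distance d_E between finite sequences over a metric space satisfies the triangle inequality: d_E(X,Y) ≤ d_E(X,Z) + d_E(Z,Y), where the key step is that monotone matchings compose: if M₁ is a monotone matching of X and Z and M₂ is a monotone matching of Z and Y, then M₃ = {(x_i, y_j) : (x_i, z_k) ∈ M₁ and (z_k, y_j) ∈ M₂ for some k} is a monotone matching of X and Y. -/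
open Finset

/-- `S` is a matching between sequences of lengths `N` and `M`: a finite set of index
pairs `(i, j)` (0-indexed, `i < N`, `j < M`) in which each index of either sequence
appears at most once. -/
def IsSeqMatching (N M : ℕ) (S : Finset (ℕ × ℕ)) : Prop :=
  (∀ p ∈ S, p.1 < N ∧ p.2 < M) ∧
  (∀ p ∈ S, ∀ q ∈ S, p.1 = q.1 → p = q) ∧
  (∀ p ∈ S, ∀ q ∈ S, p.2 = q.2 → p = q)

/-- A matching is monotone if it preserves the order of both sequences:
`i₁ < i₂ ⟺ j₁ < j₂` for any two pairs `(i₁,j₁)`, `(i₂,j₂)` in it. -/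
def IsMonotoneMatching (S : Finset (ℕ × ℕ)) : Prop :=
  ∀ p ∈ S, ∀ q ∈ S, (p.1 < q.1 ↔ p.2 < q.2)

/-- Cost of a monotone matching for the edit distance: pairwise distances of matched
entries plus penalties `d(·, Λ)` for unmatched entries. -/
noncomputable def editCost {α : Type*} [MetricSpace α] (Λ : α) (X Y : List α)
    (S : Finset (ℕ × ℕ)) : ℝ :=
  (∑ p ∈ S, dist (X.getD p.1 Λ) (Y.getD p.2 Λ))
    + (∑ i ∈ (Finset.range X.length).filter (fun i => ∀ p ∈ S, p.1 ≠ i),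
        dist (X.getD i Λ) Λ)
    + (∑ j ∈ (Finset.range Y.length).filter (fun j => ∀ p ∈ S, p.2 ≠ j),
        dist (Y.getD j Λ) Λ)

/-- The edit distance `d_E`: minimal cost over monotone matchings. -/
noncomputable def dEdit {α : Type*} [MetricSpace α] (Λ : α) (X Y : List α) : ℝ :=
  sInf {c | ∃ S, IsSeqMatching X.length Y.length S ∧ IsMonotoneMatching S ∧
    c = editCost Λ X Y S}

lemma editCost_nonneg {α : Type*} [MetricSpace α] (Λ : α) (X Y : List α)
    (S : Finset (ℕ × ℕ)) : 0 ≤ editCost Λ X Y S := by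
  unfold editCost
  have h1 : (0:ℝ) ≤ ∑ p ∈ S, dist (X.getD p.1 Λ) (Y.getD p.2 Λ) :=
    Finset.sum_nonneg fun _ _ => dist_nonneg
  have h2 : (0:ℝ) ≤ ∑ i ∈ (Finset.range X.length).filter (fun i => ∀ p ∈ S, p.1 ≠ i),
      dist (X.getD i Λ) Λ := Finset.sum_nonneg fun _ _ => dist_nonneg
  have h3 : (0:ℝ) ≤ ∑ j ∈ (Finset.range Y.length).filter (fun j => ∀ p ∈ S, p.2 ≠ j),
      dist (Y.getD j Λ) Λ := Finset.sum_nonneg fun _ _ => dist_nonneg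
  linarith

lemma dEdit_set_nonempty {α : Type*} [MetricSpace α] (Λ : α) (X Y : List α) :
    {c | ∃ S, IsSeqMatching X.length Y.length S ∧ IsMonotoneMatching S ∧
      c = editCost Λ X Y S}.Nonempty :=
  ⟨editCost Λ X Y ∅, ∅, ⟨fun p hp => absurd hp (by simp), fun p hp => absurd hp (by simp),
    fun p hp => absurd hp (by simp)⟩, fun p hp => absurd hp (by simp), rfl⟩

lemma dEdit_set_bddBelow {α : Type*} [MetricSpace α] (Λ : α) (X Y : List α) :
    BddBelow {c | ∃ S, IsSeqMatching X.length Y.length S ∧ IsMonotoneMatching S ∧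
      c = editCost Λ X Y S} :=
  ⟨0, by rintro c ⟨S, _, _, rfl⟩; exact editCost_nonneg Λ X Y S⟩

lemma dEdit_set_finite {α : Type*} [MetricSpace α] (Λ : α) (X Y : List α) :
    {c | ∃ S, IsSeqMatching X.length Y.length S ∧ IsMonotoneMatching S ∧
      c = editCost Λ X Y S}.Finite := by
  have hsub : {c | ∃ S, IsSeqMatching X.length Y.length S ∧ IsMonotoneMatching S ∧
      c = editCost Λ X Y S} ⊆
      (fun S => editCost Λ X Y S) ''
        ((Finset.range X.length ×ˢ Finset.range Y.length).powerset : Finset (Finset (ℕ × ℕ))) := by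
    rintro c ⟨S, hS, _, rfl⟩
    refine ⟨S, ?_, rfl⟩
    simp only [Finset.coe_powerset, Set.mem_preimage, Set.mem_powerset_iff, Finset.coe_subset,
      Finset.mem_coe, Finset.mem_powerset]
    intro p hp
    simp only [Finset.mem_product, Finset.mem_range]
    exact hS.1 p hp
  exact (Set.Finite.image _ (Finset.finite_toSet _)).subset hsub

lemma dEdit_exists {α : Type*} [MetricSpace α] (Λ : α) (X Y : List α) :
    ∃ S, IsSeqMatching X.length Y.length S ∧ IsMonotoneMatching S ∧
      dEdit Λ X Y = editCost Λ X Y S :=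
  (dEdit_set_nonempty Λ X Y).csInf_mem (dEdit_set_finite Λ X Y)

lemma dEdit_le {α : Type*} [MetricSpace α] (Λ : α) (X Y : List α) (S : Finset (ℕ × ℕ))
    (h : IsSeqMatching X.length Y.length S) (hm : IsMonotoneMatching S) :
    dEdit Λ X Y ≤ editCost Λ X Y S :=
  csInf_le (dEdit_set_bddBelow Λ X Y) ⟨S, h, hm, rfl⟩

lemma editCost_compose {α : Type*} [MetricSpace α] (Λ : α) (X Y Z : List α)
    (S₁ S₂ : Finset (ℕ × ℕ))
    (h₁ : IsSeqMatching X.length Z.length S₁) (m₁ : IsMonotoneMatching S₁)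
    (h₂ : IsSeqMatching Z.length Y.length S₂) (m₂ : IsMonotoneMatching S₂) :
    ∃ S₃, IsSeqMatching X.length Y.length S₃ ∧ IsMonotoneMatching S₃ ∧
      editCost Λ X Y S₃ ≤ editCost Λ X Z S₁ + editCost Λ Z Y S₂ := by
  classical
  obtain ⟨hb₁, hl₁, hr₁⟩ := h₁
  obtain ⟨hb₂, hl₂, hr₂⟩ := h₂
  set fx : ℕ → α := fun i => X.getD i Λ with hfx
  set fz : ℕ → α := fun k => Z.getD k Λ with hfz
  set fy : ℕ → α := fun j => Y.getD j Λ with hfy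
  set T : Finset ((ℕ × ℕ) × (ℕ × ℕ)) :=
    (S₁ ×ˢ S₂).filter (fun q => q.1.2 = q.2.1) with hTdef
  have hT : ∀ q ∈ T, q.1 ∈ S₁ ∧ q.2 ∈ S₂ ∧ q.1.2 = q.2.1 := by
    intro q hq
    simp only [hTdef, Finset.mem_filter, Finset.mem_product] at hq
    exact ⟨hq.1.1, hq.1.2, hq.2⟩
  have hTmem : ∀ q, q.1 ∈ S₁ → q.2 ∈ S₂ → q.1.2 = q.2.1 → q ∈ T := by
    intro q hq1 hq2 heq
    simp only [hTdef, Finset.mem_filter, Finset.mem_product]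
    exact ⟨⟨hq1, hq2⟩, heq⟩
  -- key injectivity facts on T
  have qeq : ∀ q ∈ T, ∀ q' ∈ T, q.1.1 = q'.1.1 → q = q' := by
    intro q hq q' hq' h
    obtain ⟨hq1, hq2, hqe⟩ := hT q hq
    obtain ⟨hq1', hq2', hqe'⟩ := hT q' hq'
    have e1 : q.1 = q'.1 := hl₁ q.1 hq1 q'.1 hq1' h
    have e2 : q.2 = q'.2 := hl₂ q.2 hq2 q'.2 hq2' (by rw [← hqe, ← hqe', e1])
    exact Prod.ext e1 e2
  have qeq' : ∀ q ∈ T, ∀ q' ∈ T, q.2.2 = q'.2.2 → q = q' := by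
    intro q hq q' hq' h
    obtain ⟨hq1, hq2, hqe⟩ := hT q hq
    obtain ⟨hq1', hq2', hqe'⟩ := hT q' hq'
    have e2 : q.2 = q'.2 := hr₂ q.2 hq2 q'.2 hq2' h
    have e1 : q.1 = q'.1 := hr₁ q.1 hq1 q'.1 hq1' (by rw [hqe, hqe', e2])
    exact Prod.ext e1 e2
  set S₃ : Finset (ℕ × ℕ) := T.image (fun q => (q.1.1, q.2.2)) with hS₃def
  have hS₃mem : ∀ p ∈ S₃, ∃ q ∈ T, (q.1.1, q.2.2) = p := by
    intro p hp
    simpa only [hS₃def, Finset.mem_image] using hp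
  refine ⟨S₃, ⟨?_, ?_, ?_⟩, ?_, ?_⟩
  · rintro p hp
    obtain ⟨q, hq, rfl⟩ := hS₃mem p hp
    obtain ⟨hq1, hq2, _⟩ := hT q hq
    exact ⟨(hb₁ q.1 hq1).1, (hb₂ q.2 hq2).2⟩
  · rintro p hp p' hp' h
    obtain ⟨q, hq, rfl⟩ := hS₃mem p hp
    obtain ⟨q', hq', rfl⟩ := hS₃mem p' hp'
    rw [qeq q hq q' hq' h]
  · rintro p hp p' hp' h
    obtain ⟨q, hq, rfl⟩ := hS₃mem p hp
    obtain ⟨q', hq', rfl⟩ := hS₃mem p' hp'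
    rw [qeq' q hq q' hq' h]
  · rintro p hp p' hp'
    obtain ⟨q, hq, rfl⟩ := hS₃mem p hp
    obtain ⟨q', hq', rfl⟩ := hS₃mem p' hp'
    obtain ⟨hq1, hq2, hqe⟩ := hT q hq
    obtain ⟨hq1', hq2', hqe'⟩ := hT q' hq'
    calc q.1.1 < q'.1.1 ↔ q.1.2 < q'.1.2 := m₁ q.1 hq1 q'.1 hq1'
      _ ↔ q.2.1 < q'.2.1 := by rw [hqe, hqe']
      _ ↔ q.2.2 < q'.2.2 := m₂ q.2 hq2 q'.2 hq2'
  -- the cost inequality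
  · set M₁ : Finset (ℕ × ℕ) := T.image Prod.fst with hM₁def
    set M₂ : Finset (ℕ × ℕ) := T.image Prod.snd with hM₂def
    have hM₁sub : M₁ ⊆ S₁ := by
      intro p hp
      obtain ⟨q, hq, rfl⟩ := Finset.mem_image.mp hp
      exact (hT q hq).1
    have hM₂sub : M₂ ⊆ S₂ := by
      intro p hp
      obtain ⟨q, hq, rfl⟩ := Finset.mem_image.mp hp
      exact (hT q hq).2.1
    -- matched sum bound
    have hA₃ : (∑ p ∈ S₃, dist (fx p.1) (fy p.2)) =
        ∑ q ∈ T, dist (fx q.1.1) (fy q.2.2) := by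
      rw [hS₃def, Finset.sum_image]
      intro q hq q' hq' h
      exact qeq q hq q' hq' (Prod.ext_iff.mp h).1
    have hAle : (∑ q ∈ T, dist (fx q.1.1) (fy q.2.2)) ≤
        (∑ q ∈ T, dist (fx q.1.1) (fz q.1.2)) + (∑ q ∈ T, dist (fz q.2.1) (fy q.2.2)) := by
      rw [← Finset.sum_add_distrib]
      refine Finset.sum_le_sum fun q hq => ?_
      obtain ⟨_, _, hqe⟩ := hT q hq
      calc dist (fx q.1.1) (fy q.2.2) ≤ dist (fx q.1.1) (fz q.1.2) + dist (fz q.1.2) (fy q.2.2) :=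
            dist_triangle _ _ _
        _ = dist (fx q.1.1) (fz q.1.2) + dist (fz q.2.1) (fy q.2.2) := by rw [hqe]
    have hAM₁ : (∑ q ∈ T, dist (fx q.1.1) (fz q.1.2)) =
        ∑ p ∈ M₁, dist (fx p.1) (fz p.2) := by
      rw [hM₁def, Finset.sum_image]
      intro q hq q' hq' h
      exact qeq q hq q' hq' (congrArg Prod.fst h)
    have hAM₂ : (∑ q ∈ T, dist (fz q.2.1) (fy q.2.2)) =
        ∑ p ∈ M₂, dist (fz p.1) (fy p.2) := by
      rw [hM₂def, Finset.sum_image]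
      intro q hq q' hq' h
      exact qeq' q hq q' hq' (congrArg Prod.snd h)
    -- split sums over S₁, S₂
    have hsplit₁ : (∑ p ∈ S₁ \ M₁, dist (fx p.1) (fz p.2)) + (∑ p ∈ M₁, dist (fx p.1) (fz p.2))
        = ∑ p ∈ S₁, dist (fx p.1) (fz p.2) := Finset.sum_sdiff hM₁sub
    have hsplit₂ : (∑ p ∈ S₂ \ M₂, dist (fz p.1) (fy p.2)) + (∑ p ∈ M₂, dist (fz p.1) (fy p.2))
        = ∑ p ∈ S₂, dist (fz p.1) (fy p.2) := Finset.sum_sdiff hM₂sub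
    -- unmatched X side
    have hBXsub : (Finset.range X.length).filter (fun i => ∀ p ∈ S₃, p.1 ≠ i) ⊆
        ((Finset.range X.length).filter (fun i => ∀ p ∈ S₁, p.1 ≠ i)) ∪
          ((S₁ \ M₁).image Prod.fst) := by
      intro i hi
      obtain ⟨hiN, hi3⟩ := Finset.mem_filter.mp hi
      by_cases h : ∀ p ∈ S₁, p.1 ≠ i
      · exact Finset.mem_union_left _ (Finset.mem_filter.mpr ⟨hiN, h⟩)
      · push_neg at h
        obtain ⟨p, hp, hpi⟩ := h
        refine Finset.mem_union_right _ (Finset.mem_image.mpr ⟨p, ?_, hpi⟩)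
        rw [Finset.mem_sdiff]
        refine ⟨hp, fun hpM => ?_⟩
        obtain ⟨q, hq, hqp⟩ := Finset.mem_image.mp hpM
        exact hi3 (q.1.1, q.2.2) (Finset.mem_image.mpr ⟨q, hq, rfl⟩) (by rw [← hpi, ← hqp])
    have hBXdisj : Disjoint ((Finset.range X.length).filter (fun i => ∀ p ∈ S₁, p.1 ≠ i))
        ((S₁ \ M₁).image Prod.fst) := by
      rw [Finset.disjoint_left]
      intro i hi hi'
      obtain ⟨p, hp, hpi⟩ := Finset.mem_image.mp hi'
      exact (Finset.mem_filter.mp hi).2 p (Finset.mem_sdiff.mp hp).1 hpi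
    have hBX : (∑ i ∈ (Finset.range X.length).filter (fun i => ∀ p ∈ S₃, p.1 ≠ i),
          dist (fx i) Λ) ≤
        (∑ i ∈ (Finset.range X.length).filter (fun i => ∀ p ∈ S₁, p.1 ≠ i), dist (fx i) Λ)
          + ∑ p ∈ S₁ \ M₁, dist (fx p.1) Λ := by
      calc (∑ i ∈ (Finset.range X.length).filter (fun i => ∀ p ∈ S₃, p.1 ≠ i), dist (fx i) Λ)
          ≤ ∑ i ∈ ((Finset.range X.length).filter (fun i => ∀ p ∈ S₁, p.1 ≠ i)) ∪
              ((S₁ \ M₁).image Prod.fst), dist (fx i) Λ :=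
            Finset.sum_le_sum_of_subset_of_nonneg hBXsub (fun _ _ _ => dist_nonneg)
        _ = (∑ i ∈ (Finset.range X.length).filter (fun i => ∀ p ∈ S₁, p.1 ≠ i), dist (fx i) Λ)
              + ∑ i ∈ (S₁ \ M₁).image Prod.fst, dist (fx i) Λ := Finset.sum_union hBXdisj
        _ = _ := by
            congr 1
            rw [Finset.sum_image]
            intro p hp p' hp' h
            exact hl₁ p (Finset.mem_sdiff.mp hp).1 p' (Finset.mem_sdiff.mp hp').1 h
    have hBX' : (∑ p ∈ S₁ \ M₁, dist (fx p.1) Λ) ≤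
        (∑ p ∈ S₁ \ M₁, dist (fx p.1) (fz p.2)) + ∑ p ∈ S₁ \ M₁, dist (fz p.2) Λ := by
      rw [← Finset.sum_add_distrib]
      exact Finset.sum_le_sum fun p _ => dist_triangle _ _ _
    -- leftover z from S₁ side bounded by unmatched z in S₂
    have hZ₁ : (∑ p ∈ S₁ \ M₁, dist (fz p.2) Λ) ≤
        ∑ k ∈ (Finset.range Z.length).filter (fun k => ∀ q ∈ S₂, q.1 ≠ k), dist (fz k) Λ := by
      rw [show (∑ p ∈ S₁ \ M₁, dist (fz p.2) Λ) =
          ∑ k ∈ (S₁ \ M₁).image Prod.snd, dist (fz k) Λ by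
        rw [Finset.sum_image]
        intro p hp p' hp' h
        exact hr₁ p (Finset.mem_sdiff.mp hp).1 p' (Finset.mem_sdiff.mp hp').1 h]
      refine Finset.sum_le_sum_of_subset_of_nonneg ?_ (fun _ _ _ => dist_nonneg)
      intro k hk
      obtain ⟨p, hp, hpk⟩ := Finset.mem_image.mp hk
      obtain ⟨hpS, hpM⟩ := Finset.mem_sdiff.mp hp
      refine Finset.mem_filter.mpr ⟨Finset.mem_range.mpr (hpk ▸ (hb₁ p hpS).2), ?_⟩
      intro q hq hqk
      exact hpM (Finset.mem_image.mpr ⟨(p, q), hTmem (p, q) hpS hq (by rw [hpk, hqk]), rfl⟩)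
    -- unmatched Y side
    have hBYsub : (Finset.range Y.length).filter (fun j => ∀ p ∈ S₃, p.2 ≠ j) ⊆
        ((Finset.range Y.length).filter (fun j => ∀ p ∈ S₂, p.2 ≠ j)) ∪
          ((S₂ \ M₂).image Prod.snd) := by
      intro j hj
      obtain ⟨hjM, hj3⟩ := Finset.mem_filter.mp hj
      by_cases h : ∀ p ∈ S₂, p.2 ≠ j
      · exact Finset.mem_union_left _ (Finset.mem_filter.mpr ⟨hjM, h⟩)
      · push_neg at h
        obtain ⟨p, hp, hpj⟩ := h
        refine Finset.mem_union_right _ (Finset.mem_image.mpr ⟨p, ?_, hpj⟩)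
        rw [Finset.mem_sdiff]
        refine ⟨hp, fun hpM => ?_⟩
        obtain ⟨q, hq, hqp⟩ := Finset.mem_image.mp hpM
        exact hj3 (q.1.1, q.2.2) (Finset.mem_image.mpr ⟨q, hq, rfl⟩) (by rw [← hpj, ← hqp])
    have hBYdisj : Disjoint ((Finset.range Y.length).filter (fun j => ∀ p ∈ S₂, p.2 ≠ j))
        ((S₂ \ M₂).image Prod.snd) := by
      rw [Finset.disjoint_left]
      intro j hj hj'
      obtain ⟨p, hp, hpj⟩ := Finset.mem_image.mp hj'
      exact (Finset.mem_filter.mp hj).2 p (Finset.mem_sdiff.mp hp).1 hpj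
    have hBY : (∑ j ∈ (Finset.range Y.length).filter (fun j => ∀ p ∈ S₃, p.2 ≠ j),
          dist (fy j) Λ) ≤
        (∑ j ∈ (Finset.range Y.length).filter (fun j => ∀ p ∈ S₂, p.2 ≠ j), dist (fy j) Λ)
          + ∑ p ∈ S₂ \ M₂, dist (fy p.2) Λ := by
      calc (∑ j ∈ (Finset.range Y.length).filter (fun j => ∀ p ∈ S₃, p.2 ≠ j), dist (fy j) Λ)
          ≤ ∑ j ∈ ((Finset.range Y.length).filter (fun j => ∀ p ∈ S₂, p.2 ≠ j)) ∪
              ((S₂ \ M₂).image Prod.snd), dist (fy j) Λ :=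
            Finset.sum_le_sum_of_subset_of_nonneg hBYsub (fun _ _ _ => dist_nonneg)
        _ = (∑ j ∈ (Finset.range Y.length).filter (fun j => ∀ p ∈ S₂, p.2 ≠ j), dist (fy j) Λ)
              + ∑ j ∈ (S₂ \ M₂).image Prod.snd, dist (fy j) Λ := Finset.sum_union hBYdisj
        _ = _ := by
            congr 1
            rw [Finset.sum_image]
            intro p hp p' hp' h
            exact hr₂ p (Finset.mem_sdiff.mp hp).1 p' (Finset.mem_sdiff.mp hp').1 h
    have hBY' : (∑ p ∈ S₂ \ M₂, dist (fy p.2) Λ) ≤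
        (∑ p ∈ S₂ \ M₂, dist (fz p.1) (fy p.2)) + ∑ p ∈ S₂ \ M₂, dist (fz p.1) Λ := by
      rw [← Finset.sum_add_distrib]
      refine Finset.sum_le_sum fun p _ => ?_
      calc dist (fy p.2) Λ ≤ dist (fy p.2) (fz p.1) + dist (fz p.1) Λ := dist_triangle _ _ _
        _ = dist (fz p.1) (fy p.2) + dist (fz p.1) Λ := by rw [dist_comm (fy p.2)]
    -- leftover z from S₂ side bounded by unmatched z in S₁
    have hZ₂ : (∑ p ∈ S₂ \ M₂, dist (fz p.1) Λ) ≤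
        ∑ k ∈ (Finset.range Z.length).filter (fun k => ∀ q ∈ S₁, q.2 ≠ k), dist (fz k) Λ := by
      rw [show (∑ p ∈ S₂ \ M₂, dist (fz p.1) Λ) =
          ∑ k ∈ (S₂ \ M₂).image Prod.fst, dist (fz k) Λ by
        rw [Finset.sum_image]
        intro p hp p' hp' h
        exact hl₂ p (Finset.mem_sdiff.mp hp).1 p' (Finset.mem_sdiff.mp hp').1 h]
      refine Finset.sum_le_sum_of_subset_of_nonneg ?_ (fun _ _ _ => dist_nonneg)
      intro k hk
      obtain ⟨p, hp, hpk⟩ := Finset.mem_image.mp hk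
      obtain ⟨hpS, hpM⟩ := Finset.mem_sdiff.mp hp
      refine Finset.mem_filter.mpr ⟨Finset.mem_range.mpr (hpk ▸ (hb₂ p hpS).1), ?_⟩
      intro q hq hqk
      exact hpM (Finset.mem_image.mpr ⟨(q, p), hTmem (q, p) hq hpS (by rw [hpk, hqk]), rfl⟩)
    -- assemble
    unfold editCost
    linarith [hA₃, hAle, hAM₁, hAM₂, hsplit₁, hsplit₂, hBX, hBX', hZ₁, hBY, hBY', hZ₂]

/-- The edit distance between sequences satisfies the triangle inequality. -/
theorem dEdit_triangle {α : Type*} [MetricSpace α] (Λ : α) (X Y Z : List α) :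
    dEdit Λ X Y ≤ dEdit Λ X Z + dEdit Λ Z Y := by
  obtain ⟨S₁, h₁, m₁, e₁⟩ := dEdit_exists Λ X Z
  obtain ⟨S₂, h₂, m₂, e₂⟩ := dEdit_exists Λ Z Y
  obtain ⟨S₃, h₃, m₃, hle⟩ := editCost_compose Λ X Y Z S₁ S₂ h₁ m₁ h₂ m₂
  calc dEdit Λ X Y ≤ editCost Λ X Y S₃ := dEdit_le Λ X Y S₃ h₃ m₃
    _ ≤ editCost Λ X Z S₁ + editCost Λ Z Y S₂ := hle
    _ = dEdit Λ X Z + dEdit Λ Z Y := by rw [e₁, e₂]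
end

section
/- The fixed-penalty dynamic time warping distance d_{DTW,ρ} with ρ > 0 satisfies the identity of indiscernibles: d_{DTW,ρ}(X,Y) = 0 if and only if the sequences X and Y are equal. -/
/-- `C` is a coupling of sequences of lengths `N` and `M` (0-indexed): a list of
index pairs starting at `(0,0)`, ending at `(N-1, M-1)`, with each step increasing
one or both indices by 1. -/
def IsCoupling (N M : ℕ) (C : List (ℕ × ℕ)) : Prop :=
  C.head? = some (0, 0) ∧ C.getLast? = some (N - 1, M - 1) ∧
  (∀ p ∈ C, p.1 < N ∧ p.2 < M) ∧
  C.Chain' (fun p q => q = (p.1 + 1, p.2) ∨ q = (p.1, p.2 + 1) ∨ q = (p.1 + 1, p.2 + 1))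

/-- The dynamic time warping distance `d_DTW`: the minimum over couplings of the sum
of distances of coupled entries. -/
noncomputable def dDTW {α : Type*} [MetricSpace α] [Inhabited α] (X Y : List α) : ℝ :=
  sInf {c | ∃ C, IsCoupling X.length Y.length C ∧
    c = (C.map fun p => dist (X.getI p.1) (Y.getI p.2)).sum}

/-- The amount of warping in a coupling: the number of pairs `(i,j) ∈ C` such that
`(i, j+1) ∈ C` or `(i+1, j) ∈ C`. -/
def warpCount (C : List (ℕ × ℕ)) : ℕ :=
  C.countP fun p => decide ((p.1, p.2 + 1) ∈ C ∨ (p.1 + 1, p.2) ∈ C)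

/-- The fixed-penalty DTW distance `d_{DTW,ρ}`: the minimum over couplings of the sum
of distances of coupled entries plus `ρ` per instance of warping. -/
noncomputable def dFPDTW {α : Type*} [MetricSpace α] [Inhabited α] (ρ : ℝ)
    (X Y : List α) : ℝ :=
  sInf {c | ∃ C, IsCoupling X.length Y.length C ∧
    c = (C.map fun p => dist (X.getI p.1) (Y.getI p.2)).sum + ρ * (warpCount C : ℝ)}

namespace DTWAux

-- no-warp couplings are diagonal chains
lemma chain'_diag_of_no_warp (C : List (ℕ × ℕ))
    (hc : C.Chain' (fun p q => q = (p.1 + 1, p.2) ∨ q = (p.1, p.2 + 1) ∨ q = (p.1 + 1, p.2 + 1)))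
    (h : ∀ p ∈ C, ¬ ((p.1, p.2 + 1) ∈ C ∨ (p.1 + 1, p.2) ∈ C)) :
    C.Chain' (fun p q => q = (p.1 + 1, p.2 + 1)) := by
  rw [List.Chain', List.isChain_iff_getElem] at hc ⊢
  intro i hi
  have hp := List.getElem_mem (l := C) (show i < C.length by omega)
  have hq := List.getElem_mem (l := C) (show i + 1 < C.length by omega)
  rcases hc i hi with h1 | h2 | h3
  · exact absurd (Or.inr (h1 ▸ hq)) (h _ hp)
  · exact absurd (Or.inl (h2 ▸ hq)) (h _ hp)
  · exact h3

lemma get_diag (C : List (ℕ × ℕ)) (hd : C.Chain' (fun p q => q = (p.1 + 1, p.2 + 1)))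
    (h0 : C.head? = some (0, 0)) :
    ∀ i (hi : i < C.length), C.get ⟨i, hi⟩ = (i, i) := by
  rw [List.Chain', List.isChain_iff_getElem] at hd
  intro i
  induction i with
  | zero =>
    intro hi
    have : C.get ⟨0, hi⟩ = (0, 0) := by
      have := List.get_mk_zero hi
      rw [this, ← Option.some_inj, ← List.head?_eq_head, h0]
    simpa using this
  | succ n ih =>
    intro hi
    have hn : n < C.length := by omega
    have hstep := hd n (by omega)
    simp only [List.get_eq_getElem] at ih ⊢
    rw [hstep, ih hn]

lemma no_warp_struct {N M : ℕ} (hN : 1 ≤ N) (hM : 1 ≤ M) {C : List (ℕ × ℕ)}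
    (hC : IsCoupling N M C) (hw : warpCount C = 0) :
    N = M ∧ C.length = N ∧ ∀ i (hi : i < C.length), C.get ⟨i, hi⟩ = (i, i) := by
  obtain ⟨h0, hlast, _hbd, hchain⟩ := hC
  have hmem : ∀ p ∈ C, ¬ ((p.1, p.2 + 1) ∈ C ∨ (p.1 + 1, p.2) ∈ C) := by
    rw [warpCount, List.countP_eq_zero] at hw
    intro p hp hcon
    exact (hw p hp) (by simpa using hcon)
  have hd := chain'_diag_of_no_warp C hchain hmem
  have hget := get_diag C hd h0
  have hne : C ≠ [] := by
    intro h; rw [h] at h0; simp at h0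
  have hlen : 1 ≤ C.length := List.length_pos_iff.2 hne
  have hlast' : C.getLast hne = (N - 1, M - 1) := by
    rw [List.getLast?_eq_getLast hne] at hlast
    exact Option.some_inj.1 hlast
  rw [List.getLast_eq_getElem] at hlast'
  rw [show C[C.length - 1] = (C.length - 1, C.length - 1) from hget _ (by omega)] at hlast'
  have h1 : C.length - 1 = N - 1 := congrArg Prod.fst hlast'
  have h2 : C.length - 1 = M - 1 := congrArg Prod.snd hlast'
  refine ⟨by omega, by omega, hget⟩

-- the diagonal coupling
lemma isCoupling_diag {N : ℕ} (hN : 1 ≤ N) :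
    IsCoupling N N ((List.range N).map fun i => (i, i)) := by
  obtain ⟨n, rfl⟩ : ∃ n, N = n + 1 := ⟨N - 1, by omega⟩
  refine ⟨?_, ?_, ?_, ?_⟩
  · rw [List.head?_map, List.range_succ_eq_map]
    simp
  · rw [List.getLast?_map, List.range_succ]
    simp
  · intro p hp
    simp only [List.mem_map, List.mem_range] at hp
    obtain ⟨i, hi, rfl⟩ := hp
    exact ⟨hi, hi⟩
  · rw [List.Chain', List.isChain_map, List.isChain_range_succ]
    intro m _
    right; right; rfl

lemma warpCount_diag (N : ℕ) : warpCount ((List.range N).map fun i => (i, i)) = 0 := by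
  rw [warpCount, List.countP_eq_zero]
  intro p hp
  simp only [List.mem_map, List.mem_range] at hp
  obtain ⟨i, _, rfl⟩ := hp
  simp only [decide_eq_true_eq, List.mem_map, List.mem_range]
  rintro (⟨j, _, hj⟩ | ⟨j, _, hj⟩) <;>
  · obtain ⟨h1, h2⟩ := Prod.mk.injEq .. ▸ hj
    omega

lemma getLast?_map_range_succ {β : Type*} (f : ℕ → β) (n : ℕ) :
    ((List.range (n + 1)).map f).getLast? = some (f n) := by
  rw [List.range_succ]; simp

lemma head?_map_range_succ {β : Type*} (f : ℕ → β) (n : ℕ) :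
    ((List.range (n + 1)).map f).head? = some (f 0) := by
  rw [List.range_succ_eq_map]; simp

-- the L-shaped coupling
lemma isCoupling_L {N M : ℕ} (hN : 1 ≤ N) (hM : 1 ≤ M) :
    IsCoupling N M (((List.range N).map fun i => (i, 0)) ++
      ((List.range (M - 1)).map fun j => (N - 1, j + 1))) := by
  obtain ⟨n, rfl⟩ : ∃ n, N = n + 1 := ⟨N - 1, by omega⟩
  obtain ⟨m, rfl⟩ : ∃ m, M = m + 1 := ⟨M - 1, by omega⟩
  simp only [Nat.add_sub_cancel]
  refine ⟨?_, ?_, ?_, ?_⟩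
  · rw [List.head?_append, List.head?_map, List.range_succ_eq_map]
    simp
  · rcases Nat.eq_zero_or_pos m with hm0 | hm0
    · subst hm0
      simp [List.getLast?_append, List.getLast?_map, List.range_succ]
    · obtain ⟨k, rfl⟩ : ∃ k, m = k + 1 := ⟨m - 1, by omega⟩
      rw [List.getLast?_append, getLast?_map_range_succ]
      simp
  · intro p hp
    simp only [List.mem_append, List.mem_map, List.mem_range] at hp
    rcases hp with ⟨i, hi, rfl⟩ | ⟨j, hj, rfl⟩ <;> constructor <;> omega
  · rw [List.Chain', List.isChain_append]
    refine ⟨?_, ?_, ?_⟩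
    · rw [List.isChain_map, List.isChain_range_succ]
      intro i _; left; rfl
    · rw [List.isChain_map]
      rcases Nat.eq_zero_or_pos m with hm0 | hm0
      · subst hm0; simp
      · obtain ⟨k, rfl⟩ : ∃ k, m = k + 1 := ⟨m - 1, by omega⟩
        rw [List.isChain_range_succ]
        intro j _; right; left; rfl
    · intro x hx y hy
      rw [getLast?_map_range_succ] at hx
      rcases Nat.eq_zero_or_pos m with hm0 | hm0
      · subst hm0; simp at hy
      · obtain ⟨k, rfl⟩ : ∃ k, m = k + 1 := ⟨m - 1, by omega⟩
        rw [head?_map_range_succ] at hy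
        simp only [Option.mem_def, Option.some_inj] at hx hy
        subst hx; subst hy
        right; left; rfl

end DTWAux

/-- The fixed-penalty DTW distance satisfies the identity of indiscernibles. -/
theorem dFPDTW_eq_zero_iff {α : Type*} [MetricSpace α] [Inhabited α] (ρ : ℝ)
    (hρ : 0 < ρ) (X Y : List α) (hX : X ≠ []) (hY : Y ≠ []) :
    dFPDTW ρ X Y = 0 ↔ X = Y := by
  have hN : 1 ≤ X.length := List.length_pos_iff.2 hX
  have hM : 1 ≤ Y.length := List.length_pos_iff.2 hY
  have hnonneg : ∀ c ∈ {c | ∃ C, IsCoupling X.length Y.length C ∧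
      c = (C.map fun p => dist (X.getI p.1) (Y.getI p.2)).sum + ρ * (warpCount C : ℝ)},
      (0:ℝ) ≤ c := by
    rintro c ⟨C, _, rfl⟩
    have h1 : 0 ≤ (C.map fun p => dist (X.getI p.1) (Y.getI p.2)).sum := by
      apply List.sum_nonneg
      rintro x hx
      simp only [List.mem_map] at hx
      obtain ⟨p, _, rfl⟩ := hx
      exact dist_nonneg
    have h2 : 0 ≤ ρ * (warpCount C : ℝ) := mul_nonneg hρ.le (Nat.cast_nonneg _)
    linarith
  have hSne : {c | ∃ C, IsCoupling X.length Y.length C ∧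
      c = (C.map fun p => dist (X.getI p.1) (Y.getI p.2)).sum + ρ * (warpCount C : ℝ)}.Nonempty :=
    ⟨_, _, DTWAux.isCoupling_L hN hM, rfl⟩
  constructor
  · intro h
    by_contra hne
    have hbound : ∃ ε > (0:ℝ), ∀ c ∈ {c | ∃ C, IsCoupling X.length Y.length C ∧
        c = (C.map fun p => dist (X.getI p.1) (Y.getI p.2)).sum + ρ * (warpCount C : ℝ)},
        ε ≤ c := by
      by_cases hNM : X.length = Y.length
      · have hk : ∃ k, k < X.length ∧ X.getI k ≠ Y.getI k := by
          by_contra h'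
          push_neg at h'
          refine hne (List.ext_get hNM fun n h1 h2 => ?_)
          rw [List.get_eq_getElem, List.get_eq_getElem, ← List.getI_eq_getElem _ h1, ← List.getI_eq_getElem _ h2]
          exact h' n h1
        obtain ⟨k, hk, hkne⟩ := hk
        refine ⟨min ρ (dist (X.getI k) (Y.getI k)), lt_min hρ (dist_pos.2 hkne), ?_⟩
        rintro c ⟨C, hC, rfl⟩
        have hsum : 0 ≤ (C.map fun p => dist (X.getI p.1) (Y.getI p.2)).sum := by
          apply List.sum_nonneg
          rintro x hx
          simp only [List.mem_map] at hx
          obtain ⟨p, _, rfl⟩ := hx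
          exact dist_nonneg
        have hcnt : 0 ≤ ρ * (warpCount C : ℝ) := mul_nonneg hρ.le (Nat.cast_nonneg _)
        by_cases hw : warpCount C = 0
        · obtain ⟨_, hlen, hget⟩ := DTWAux.no_warp_struct hN hM hC hw
          have hkC : (k, k) ∈ C := by
            have := hget k (by omega)
            rw [← this]
            exact C.get_mem _
          have hterm : dist (X.getI k) (Y.getI k) ∈
              C.map fun p => dist (X.getI p.1) (Y.getI p.2) := by
            exact List.mem_map_of_mem hkC
          have hle := List.single_le_sum
            (by rintro x hx
                simp only [List.mem_map] at hx
                obtain ⟨p, _, rfl⟩ := hx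
                exact dist_nonneg) _ hterm
          have := min_le_right ρ (dist (X.getI k) (Y.getI k))
          linarith
        · have h1 : (1:ℝ) ≤ (warpCount C : ℝ) := by
            exact_mod_cast Nat.one_le_iff_ne_zero.2 hw
          have : ρ * 1 ≤ ρ * (warpCount C : ℝ) := by
            apply mul_le_mul_of_nonneg_left h1 hρ.le
          have := min_le_left ρ (dist (X.getI k) (Y.getI k))
          linarith
      · refine ⟨ρ, hρ, ?_⟩
        rintro c ⟨C, hC, rfl⟩
        have hsum : 0 ≤ (C.map fun p => dist (X.getI p.1) (Y.getI p.2)).sum := by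
          apply List.sum_nonneg
          rintro x hx
          simp only [List.mem_map] at hx
          obtain ⟨p, _, rfl⟩ := hx
          exact dist_nonneg
        have hw : warpCount C ≠ 0 := by
          intro hw0
          exact hNM (DTWAux.no_warp_struct hN hM hC hw0).1
        have h1 : (1:ℝ) ≤ (warpCount C : ℝ) := by
          exact_mod_cast Nat.one_le_iff_ne_zero.2 hw
        have : ρ * 1 ≤ ρ * (warpCount C : ℝ) :=
          mul_le_mul_of_nonneg_left h1 hρ.le
        linarith
    obtain ⟨ε, hε, hb⟩ := hbound
    have hle : ε ≤ dFPDTW ρ X Y := le_csInf hSne hb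
    rw [h] at hle
    linarith
  · rintro rfl
    have h0mem : (0:ℝ) ∈ {c | ∃ C, IsCoupling X.length X.length C ∧
        c = (C.map fun p => dist (X.getI p.1) (X.getI p.2)).sum + ρ * (warpCount C : ℝ)} := by
      refine ⟨(List.range X.length).map fun i => (i, i), DTWAux.isCoupling_diag hN, ?_⟩
      rw [DTWAux.warpCount_diag]
      have hsum0 : ((((List.range X.length).map fun i => (i, i)).map
          fun p => dist (X.getI p.1) (X.getI p.2)).sum) = 0 := by
        apply List.sum_eq_zero
        rintro x hx
        simp only [List.mem_map, List.mem_range] at hx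
        obtain ⟨p, ⟨i, _, rfl⟩, rfl⟩ := hx
        simp
      rw [hsum0]
      simp
    refine le_antisymm (csInf_le ⟨0, hnonneg⟩ h0mem) (le_csInf ⟨0, h0mem⟩ hnonneg)
end
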